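/- arXiv:1707.01039 — 5 statements merged into one kernel-verified Lean document; each statement's English description precedes it below -/
import Mathlib

section
/- Let θ_k be a random variable on [0, π] with density f(θ) = sin(θ)/2 and φ_k an independent random variable uniform on [0, 2π]. Then for any real constants α_1, α_2 with α = sqrt(α_1^2 + α_2^2) > 0, E[exp(i 2π sin(θ_k)(α_1 cos(φ_k) + α_2 sin(φ_k)))] = sinc(2α), where sinc(x) = sin(πx)/(πx). -/
open Real Complex MeasureTheory Finset Nat

/-- Interchange of an interval integral with a `tsum`, given a summable uniform bound. -/
lemma tsum_swap_aux {f : ℕ → ℝ → ℂ} {a b : ℝ} (hab : a ≤ b)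
    (hc : ∀ n, Continuous (f n)) {B : ℕ → ℝ}
    (hB : ∀ n x, ‖f n x‖ ≤ B n) (hBs : Summable B) :
    ∫ x in a..b, (∑' n, f n x) = ∑' n, ∫ x in a..b, f n x := by
  simp_rw [intervalIntegral.integral_of_le hab]
  refine (MeasureTheory.integral_tsum_of_summable_integral_norm ?_ ?_).symm
  · intro n; exact ((hc n).integrableOn_Ioc)
  · refine Summable.of_nonneg_of_le (fun n => integral_nonneg (fun x => norm_nonneg _)) ?_
      (hBs.mul_right (b - a))
    intro n
    calc ∫ x in Set.Ioc a b, ‖f n x‖ ≤ ∫ _x in Set.Ioc a b, B n := by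
          apply setIntegral_mono_on ((hc n).norm.integrableOn_Ioc)
            (integrableOn_const measure_Ioc_lt_top.ne) measurableSet_Ioc
          intro x _; exact hB n x
      _ = B n * (b - a) := by
          simp [Real.volume_Ioc, ENNReal.toReal_ofReal (sub_nonneg.2 hab), mul_comm, hab]

lemma prod_telescope_aux (m : ℕ) :
    ∏ i ∈ range m, ((2 * (i:ℝ) + 1) / (2 * i + 3)) = 1 / (2 * m + 1) := by
  induction m with
  | zero => simp
  | succ k ih =>
    rw [prod_range_succ, ih]
    have h1 : (2 * (k:ℝ) + 1) ≠ 0 := by positivity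
    have h3 : (2 * (k:ℝ) + 3) ≠ 0 := by positivity
    push_cast
    field_simp
    ring

lemma cos_pow_integral_aux (n : ℕ) :
    ∫ y in (0:ℝ)..(2 * π), Real.cos y ^ n
      = (1 + (-1:ℝ) ^ n) * ∫ x in (0:ℝ)..π, Real.sin x ^ n := by
  have hper : Function.Periodic (fun y => Real.sin y ^ n) (2 * π) := fun y => by
    simp [Real.sin_add_two_pi]
  have h1 : ∫ y in (0:ℝ)..(2 * π), Real.cos y ^ n
      = ∫ y in (0:ℝ)..(2 * π), Real.sin y ^ n := by
    have : ∀ y : ℝ, Real.cos y ^ n = Real.sin (y + π / 2) ^ n := by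
      intro y; rw [Real.sin_add_pi_div_two]
    simp_rw [this]
    rw [intervalIntegral.integral_comp_add_right (fun y => Real.sin y ^ n) (π / 2)]
    have := hper.intervalIntegral_add_eq (π / 2) 0
    simpa [zero_add, add_comm] using this
  have h2 : ∫ y in (π:ℝ)..(2 * π), Real.sin y ^ n
      = (-1:ℝ) ^ n * ∫ x in (0:ℝ)..π, Real.sin x ^ n := by
    have : ∫ y in (π:ℝ)..(2 * π), Real.sin y ^ n
        = ∫ y in (0:ℝ)..π, Real.sin (y + π) ^ n := by
      rw [intervalIntegral.integral_comp_add_right (fun y => Real.sin y ^ n) π]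
      norm_num [two_mul]
    rw [this]
    have hy : ∀ y : ℝ, Real.sin (y + π) ^ n = (-1:ℝ)^n * Real.sin y ^ n := by
      intro y; rw [Real.sin_add_pi, neg_pow]
    simp_rw [hy]
    rw [intervalIntegral.integral_const_mul]
  have h3 : ∫ y in (0:ℝ)..(2 * π), Real.sin y ^ n
      = (∫ y in (0:ℝ)..π, Real.sin y ^ n) + ∫ y in (π:ℝ)..(2*π), Real.sin y ^ n := by
    rw [intervalIntegral.integral_add_adjacent_intervals] <;>
      exact (Real.continuous_sin.pow n).intervalIntegrable _ _
  rw [h1, h3, h2]; ring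

lemma inner_eq_aux (c : ℝ) (hc : 0 < c) (t : ℝ) (ht : |t| ≤ 1) :
    ∫ x in (0:ℝ)..π, Complex.exp (Complex.I * (c * Real.sin x * t)) * (Real.sin x / (4*π))
      = ∑' (n : ℕ), (Complex.I * c * t) ^ n / n ! / (4*π) *
          ((∫ x in (0:ℝ)..π, Real.sin x ^ (n+1) : ℝ) : ℂ) := by
  have hexp : ∀ w : ℂ, Complex.exp w = ∑' (n : ℕ), w ^ n / n ! := by
    intro w
    rw [Complex.exp_eq_exp_ℂ, NormedSpace.exp_eq_tsum_div]
  have hpt : ∀ x : ℝ, Complex.exp (Complex.I * (c * Real.sin x * t)) * (Real.sin x / (4*π))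
      = ∑' (n : ℕ), (Complex.I * c * t) ^ n / n ! / (4*π) * ((Real.sin x ^ (n+1) : ℝ) : ℂ) := by
    intro x
    rw [hexp, ← tsum_mul_right]
    congr 1; funext n
    have h1 : (Complex.I * (c * Real.sin x * t)) = (Complex.I * c * t) * (Real.sin x : ℂ) := by
      push_cast; ring
    rw [h1, mul_pow]
    push_cast
    rw [pow_succ]
    ring
  simp_rw [hpt]
  rw [tsum_swap_aux Real.pi_pos.le ?_ (B := fun n => c ^ n / n ! / (4*π)) ?_ ?_]
  · congr 1; funext n
    rw [intervalIntegral.integral_const_mul, intervalIntegral.integral_ofReal]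
  · intro n; fun_prop
  · intro n x
    have h1 : ‖(Complex.I * c * t) ^ n / (n ! : ℂ) / (4*(π:ℂ)) * ((Real.sin x ^ (n+1) : ℝ) : ℂ)‖
        = (c * |t|) ^ n / n ! / (4*π) * |Real.sin x| ^ (n+1) := by
      have e1 : ‖Complex.I * (c:ℂ) * (t:ℂ)‖ = c * |t| := by
        rw [norm_mul, norm_mul, Complex.norm_I, one_mul, Complex.norm_real,
          Complex.norm_real, Real.norm_eq_abs, Real.norm_eq_abs, abs_of_pos hc]
      have e2 : ‖((Real.sin x ^ (n+1) : ℝ) : ℂ)‖ = |Real.sin x| ^ (n+1) := by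
        rw [Complex.norm_real, Real.norm_eq_abs, _root_.abs_pow]
      rw [norm_mul, norm_div, norm_div, norm_pow, e1, e2]
      norm_num [Complex.norm_natCast, Complex.norm_real, Real.norm_eq_abs,
        abs_of_pos Real.pi_pos]
    rw [h1]
    have h2 : (c * |t|) ^ n ≤ c ^ n := by
      apply pow_le_pow_left₀ (by positivity)
      nlinarith [abs_nonneg t]
    have h3 : |Real.sin x| ^ (n+1) ≤ 1 := by
      apply pow_le_one₀ (abs_nonneg _) (Real.abs_sin_le_one x)
    calc (c * |t|) ^ n / n ! / (4*π) * |Real.sin x| ^ (n+1)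
        ≤ c ^ n / n ! / (4*π) * 1 := by gcongr
      _ = c ^ n / n ! / (4*π) := mul_one _
  · exact (Real.summable_pow_div_factorial c).div_const (4*π)

noncomputable def sinc (x : ℝ) : ℝ := Real.sin (π * x) / (π * x)

/-- For a uniformly distributed direction on the sphere (elevation density
`sin θ / 2` on `[0, π]`, azimuth uniform on `[0, 2π]`), the characteristic
expectation equals `sinc(2α)` where `α = sqrt(α₁² + α₂²)`. -/
theorem expectation_sinc
    (α₁ α₂ α : ℝ) (hα : α = Real.sqrt (α₁ ^ 2 + α₂ ^ 2)) (hα0 : 0 < α) :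
    (∫ y in (0 : ℝ)..(2 * π), ∫ x in (0 : ℝ)..π,
        Complex.exp (Complex.I * (2 * π * Real.sin x *
          (α₁ * Real.cos y + α₂ * Real.sin y))) * (Real.sin x / (4 * π))) =
      (_root_.sinc (2 * α) : ℂ) := by
  set c : ℝ := 2 * π * α with hcdef
  have hc : 0 < c := by positivity
  set S : ℕ → ℝ := fun n => ∫ x in (0:ℝ)..π, Real.sin x ^ n with hSdef
  set F : ℝ → ℂ := fun t => ∫ x in (0:ℝ)..π,
      Complex.exp (Complex.I * (2 * π * Real.sin x * t)) * (Real.sin x / (4 * π)) with hFdef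
  -- Step 1: phase shift
  have step1 : (∫ y in (0 : ℝ)..(2 * π), ∫ x in (0 : ℝ)..π,
        Complex.exp (Complex.I * (2 * π * Real.sin x *
          (α₁ * Real.cos y + α₂ * Real.sin y))) * (Real.sin x / (4 * π)))
      = ∫ y in (0:ℝ)..(2*π), F (α * Real.cos y) := by
    have hL : (∫ y in (0 : ℝ)..(2 * π), ∫ x in (0 : ℝ)..π,
        Complex.exp (Complex.I * (2 * π * Real.sin x *
          (α₁ * Real.cos y + α₂ * Real.sin y))) * (Real.sin x / (4 * π)))
        = ∫ y in (0:ℝ)..(2*π), F (α₁ * Real.cos y + α₂ * Real.sin y) := by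
      refine intervalIntegral.integral_congr fun y _ => ?_
      rw [hFdef]
      refine intervalIntegral.integral_congr fun x _ => ?_
      norm_cast
    rw [hL]
    set z : ℂ := ⟨α₁, α₂⟩ with hzdef
    have habs : ‖z‖ = α := by
      rw [hα]; simp [Complex.norm_def, Complex.normSq_mk, hzdef, pow_two]
    have hz : z ≠ 0 := by
      intro h; rw [h] at habs; simp at habs; linarith
    set φ₀ := Complex.arg z with hφ
    have h1 : α₁ = α * Real.cos φ₀ := by
      rw [hφ, Complex.cos_arg hz, habs]
      field_simp [hzdef]; rw [hzdef]
    have h2 : α₂ = α * Real.sin φ₀ := by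
      rw [hφ, Complex.sin_arg, habs]
      field_simp [hzdef]; rw [hzdef]
    have key : ∀ y : ℝ, α₁ * Real.cos y + α₂ * Real.sin y = α * Real.cos (y - φ₀) := by
      intro y; rw [h1, h2, Real.cos_sub]; ring
    simp_rw [key]
    have hper : Function.Periodic (fun y => F (α * Real.cos (y - φ₀))) (2 * π) := fun y => by
      have : y + 2 * π - φ₀ = (y - φ₀) + 2 * π := by ring
      simp [this, Real.cos_add_two_pi]
    have hshift := hper.intervalIntegral_add_eq 0 φ₀
    rw [zero_add] at hshift
    rw [hshift]
    have hcomp := intervalIntegral.integral_comp_sub_right (fun y => F (α * Real.cos y)) φ₀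
      (a := φ₀) (b := φ₀ + 2 * π)
    simp only [sub_self, add_sub_cancel_left] at hcomp
    exact hcomp
  rw [step1]
  -- Step 2: inner series expansion
  have hF : ∀ y : ℝ, F (α * Real.cos y)
      = ∑' (n : ℕ), (Complex.I * c * Real.cos y) ^ n / n ! / (4*π) * ((S (n+1) : ℝ) : ℂ) := by
    intro y
    have hFy : F (α * Real.cos y) = ∫ x in (0:ℝ)..π,
        Complex.exp (Complex.I * (c * Real.sin x * Real.cos y)) * (Real.sin x / (4*π)) := by
      rw [hFdef]
      refine intervalIntegral.integral_congr fun x _ => ?_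
      have h : Complex.I * (2 * (π:ℂ) * (Real.sin x : ℂ) * ((α * Real.cos y : ℝ) : ℂ))
          = Complex.I * ((c:ℂ) * (Real.sin x : ℂ) * (Real.cos y : ℂ)) := by
        rw [hcdef]; push_cast; ring
      rw [h]
    rw [hFy, inner_eq_aux c hc (Real.cos y) (Real.abs_cos_le_one y)]
  simp_rw [hF]
  -- Step 3: outer swap
  rw [tsum_swap_aux (by positivity : (0:ℝ) ≤ 2*π) ?_ (B := fun n => c ^ n / n ! / (4*π) * π) ?_ ?_]
  · -- Step 4: compute each outer integral and sum
    have hint : ∀ n : ℕ, (∫ y in (0:ℝ)..(2*π),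
          (Complex.I * c * Real.cos y) ^ n / n ! / (4*π) * ((S (n+1) : ℝ) : ℂ))
        = (Complex.I * c) ^ n / n ! / (4*π) * ((S (n+1) : ℝ) : ℂ)
            * (((1 + (-1:ℝ)^n) * S n : ℝ) : ℂ) := by
      intro n
      have hterm : ∀ y : ℝ, (Complex.I * c * Real.cos y) ^ n / n ! / (4*π) * ((S (n+1) : ℝ) : ℂ)
          = ((Complex.I * c) ^ n / n ! / (4*π) * ((S (n+1) : ℝ) : ℂ))
              * ((Real.cos y ^ n : ℝ) : ℂ) := by
        intro y; rw [mul_pow]; push_cast; ring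
      simp_rw [hterm]
      rw [intervalIntegral.integral_const_mul, intervalIntegral.integral_ofReal,
        cos_pow_integral_aux]
    simp_rw [hint]
    -- only even terms survive
    have hinj : Function.Injective (fun m : ℕ => 2 * m) := fun a b h => by
      simpa using h
    have hzero : Function.support (fun x : ℕ =>
        (Complex.I * c) ^ x / x ! / (4*π) * ((S (x+1) : ℝ) : ℂ)
          * (((1 + (-1:ℝ)^x) * S x : ℝ) : ℂ)) ⊆ Set.range (fun m : ℕ => 2 * m) := by
      intro x hx
      rcases Nat.even_or_odd x with he | ho
      · rcases he with ⟨k, hk⟩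
        exact ⟨k, show 2 * k = x by omega⟩
      · exfalso
        apply hx
        have : (1 + (-1:ℝ)^x) = 0 := by rw [ho.neg_one_pow]; ring
        simp only [this]
        simp
    rw [← Function.Injective.tsum_eq hinj hzero]
    have key : ∀ m : ℕ, (Complex.I * c) ^ (2*m) / (2*m)! / (4*π) * ((S (2*m+1) : ℝ) : ℂ)
          * (((1 + (-1:ℝ)^(2*m)) * S (2*m) : ℝ) : ℂ)
        = (((-1:ℝ)^m * c^(2*m) / (2*m+1)! : ℝ) : ℂ) := by
      intro m
      have hI : (Complex.I * (c:ℂ)) ^ (2*m) = (((-1:ℝ)^m * c^(2*m) : ℝ) : ℂ) := by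
        rw [mul_pow, pow_mul, Complex.I_sq]; push_cast; ring
      have hS1 : S (2*m+1) = 2 * ∏ i ∈ range m, (2 * (i:ℝ) + 2) / (2 * i + 3) :=
        integral_sin_pow_odd m
      have hS2 : S (2*m) = π * ∏ i ∈ range m, (2 * (i:ℝ) + 1) / (2 * i + 2) :=
        integral_sin_pow_even m
      have hsign : (1 + (-1:ℝ)^(2*m)) = 2 := by
        rw [pow_mul]; norm_num
      have hP : (∏ i ∈ range m, (2 * (i:ℝ) + 2) / (2 * i + 3))
          * ∏ i ∈ range m, (2 * (i:ℝ) + 1) / (2 * i + 2) = 1 / (2*m+1) := by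
        rw [← Finset.prod_mul_distrib]
        rw [← prod_telescope_aux m]
        apply Finset.prod_congr rfl
        intro i _
        have h2 : (2 * (i:ℝ) + 2) ≠ 0 := by positivity
        have h3 : (2 * (i:ℝ) + 3) ≠ 0 := by positivity
        field_simp
      have hfact : ((2*m+1)! : ℝ) = (2*(m:ℝ)+1) * (2*m)! := by
        have := Nat.factorial_succ (2*m)
        push_cast [this]
        ring
      have hreal : ((-1:ℝ)^m * c^(2*m)) / (2*m)! / (4*π)
            * (2 * ∏ i ∈ range m, (2 * (i:ℝ) + 2) / (2 * i + 3))
            * (2 * (π * ∏ i ∈ range m, (2 * (i:ℝ) + 1) / (2 * i + 2)))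
          = (-1:ℝ)^m * c^(2*m) / (2*m+1)! := by
        rw [hfact]
        have hf : ((2*m)! : ℝ) ≠ 0 := by positivity
        have h2m1 : (2*(m:ℝ)+1) ≠ 0 := by positivity
        have hπ : (π : ℝ) ≠ 0 := Real.pi_ne_zero
        calc ((-1:ℝ)^m * c^(2*m)) / (2*m)! / (4*π)
              * (2 * ∏ i ∈ range m, (2 * (i:ℝ) + 2) / (2 * i + 3))
              * (2 * (π * ∏ i ∈ range m, (2 * (i:ℝ) + 1) / (2 * i + 2)))
            = ((-1:ℝ)^m * c^(2*m)) / (2*m)!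
              * ((∏ i ∈ range m, (2 * (i:ℝ) + 2) / (2 * i + 3))
                * ∏ i ∈ range m, (2 * (i:ℝ) + 1) / (2 * i + 2)) := by
              field_simp
              ring
          _ = (-1:ℝ)^m * c^(2*m) / ((2*(m:ℝ)+1) * (2*m)!) := by
              rw [hP]; field_simp
      rw [hI, hS1, hS2, hsign, ← hreal]
      push_cast
      ring
    simp_rw [key]
    rw [← Complex.ofReal_tsum]
    have hsinc : _root_.sinc (2 * α) = Real.sin c / c := by
      rw [_root_.sinc, hcdef]; ring_nf
    rw [hsinc]
    congr 1
    have h := (Real.hasSum_sin c).div_const c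
    have heq : (fun m : ℕ => (-1:ℝ)^m * c^(2*m+1) / (2*m+1)! / c)
        = fun m : ℕ => (-1:ℝ)^m * c^(2*m) / (2*m+1)! := by
      funext m
      rw [pow_succ]
      field_simp
    rw [heq] at h
    exact h.tsum_eq
  · intro n; fun_prop
  · intro n y
    have hSb : |S (n+1)| ≤ π := by
      have := intervalIntegral.norm_integral_le_of_norm_le_const
        (a := (0:ℝ)) (b := π) (C := 1) (f := fun x => Real.sin x ^ (n+1)) ?_
      · rw [Real.norm_eq_abs] at this
        simpa [abs_of_pos Real.pi_pos] using this
      · intro x _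
        rw [Real.norm_eq_abs, _root_.abs_pow]
        exact pow_le_one₀ (abs_nonneg _) (Real.abs_sin_le_one x)
    have h1 : ‖(Complex.I * c * Real.cos y) ^ n / (n ! : ℂ) / (4*(π:ℂ)) * ((S (n+1) : ℝ) : ℂ)‖
        = (c * |Real.cos y|) ^ n / n ! / (4*π) * |S (n+1)| := by
      have e1 : ‖Complex.I * (c:ℂ) * ((Real.cos y : ℝ):ℂ)‖ = c * |Real.cos y| := by
        rw [norm_mul, norm_mul, Complex.norm_I, one_mul, Complex.norm_real,
          Complex.norm_real, Real.norm_eq_abs, Real.norm_eq_abs, abs_of_pos hc]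
      rw [norm_mul, norm_div, norm_div, norm_pow, e1, Complex.norm_real, Real.norm_eq_abs]
      norm_num [Complex.norm_natCast, Complex.norm_real, Real.norm_eq_abs,
        abs_of_pos Real.pi_pos]
    rw [h1]
    have h2 : (c * |Real.cos y|) ^ n ≤ c ^ n := by
      apply pow_le_pow_left₀ (by positivity)
      nlinarith [abs_nonneg (Real.cos y), Real.abs_cos_le_one y]
    refine mul_le_mul ?_ hSb (abs_nonneg _) (by positivity)
    gcongr
  · exact ((Real.summable_pow_div_factorial c).div_const (4*π)).mul_right π
end

section
/- For every α > 0, ∫_0^{π/2} ∫_0^{π/2} cos(2π α sin x cos y) sin x dx dy = (π/2) cos(πα) sinc(α) and ∫_0^{π/2} ∫_0^{π/2} sin(2π α sin x cos y) sin x dx dy = (π/2) sin(πα) sinc(α), where sinc(α) = sin(πα)/(πα). Equivalently, h(α) := ∫_0^{π/2} ∫_0^{π/2} e^{i2πα sin x cos y} sin x dx dy = (π/2) e^{iπα} sinc(α). -/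
open Real Complex

namespace QDI
open MeasureTheory intervalIntegral

noncomputable def S (n : ℕ) : ℝ := ∫ x in (0:ℝ)..(π/2), Real.sin x ^ n

lemma S_zero : S 0 = π / 2 := by simp [S]

lemma S_one : S 1 = 1 := by simp [S]

lemma S_rec (n : ℕ) : S (n+2) = (n+1)/(n+2) * S n := by
  have h := integral_sin_pow (a := 0) (b := π/2) (n := n)
  simpa [S] using h

lemma S_nonneg (n : ℕ) : 0 ≤ S n := by
  apply intervalIntegral.integral_nonneg (by positivity)
  intro x hx
  exact pow_nonneg (Real.sin_nonneg_of_nonneg_of_le_pi hx.1 (by nlinarith [pi_pos, hx.2])) n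

lemma S_le (n : ℕ) : S n ≤ π / 2 := by
  have h : S n ≤ ∫ _x in (0:ℝ)..(π/2), (1:ℝ) := by
    apply intervalIntegral.integral_mono_on (by positivity)
    · apply Continuous.intervalIntegrable; fun_prop
    · apply _root_.intervalIntegrable_const
    · intro x hx
      exact pow_le_one₀ (Real.sin_nonneg_of_nonneg_of_le_pi hx.1 (by nlinarith [pi_pos, hx.2]))
        (Real.sin_le_one x)
  simpa using h

lemma S_mul (n : ℕ) : S n * S (n+1) = π / (2*(n+1)) := by
  induction n with
  | zero => simp [S_zero, S_one]
  | succ m ih =>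
    rw [show m+1+1 = m+2 from rfl, S_rec, mul_comm (S (m+1)), mul_assoc, ih]
    have : (0:ℝ) < m+1 := by positivity
    field_simp
    push_cast
    ring

lemma cos_pow_int (n : ℕ) : (∫ y in (0:ℝ)..(π/2), Real.cos y ^ n) = S n := by
  have := intervalIntegral.integral_comp_sub_left (a := (0:ℝ)) (b := π/2)
    (fun x => Real.sin x ^ n) (π/2)
  simp only [sub_zero, sub_self] at this
  rw [S, ← this]
  congr 1; ext y
  rw [Real.sin_pi_div_two_sub]

lemma swap_tsum (F : ℕ → ℝ → ℂ) (hc : ∀ n, Continuous (F n)) (u : ℕ → ℝ)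
    (hu : Summable u) (hb : ∀ n x, ‖F n x‖ ≤ u n) :
    (∫ x in (0:ℝ)..(π/2), (∑' n, F n x)) = ∑' n, ∫ x in (0:ℝ)..(π/2), F n x := by
  have hle : (0:ℝ) ≤ π/2 := by positivity
  simp only [intervalIntegral.integral_of_le hle]
  refine (MeasureTheory.integral_tsum_of_summable_integral_norm (fun n => ?_) ?_).symm
  · exact (hc n).integrableOn_Ioc
  · apply Summable.of_nonneg_of_le (fun n => integral_nonneg (fun x => norm_nonneg _))
      (fun n => ?_) (hu.mul_left (π/2))
    have h1 : (∫ x in Set.Ioc (0:ℝ) (π/2), ‖F n x‖) ≤ ∫ _x in Set.Ioc (0:ℝ) (π/2), u n := by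
      apply setIntegral_mono_on ((hc n).norm.integrableOn_Ioc)
        (integrableOn_const measure_Ioc_lt_top.ne) measurableSet_Ioc
      exact fun x _ => hb n x
    calc (∫ x in Set.Ioc (0:ℝ) (π/2), ‖F n x‖) ≤ ∫ _x in Set.Ioc (0:ℝ) (π/2), u n := h1
      _ = π/2 * u n := by
          rw [setIntegral_const, measureReal_def, Real.volume_Ioc, smul_eq_mul, sub_zero,
            ENNReal.toReal_ofReal hle]

lemma exp_tsum (z : ℂ) : Complex.exp z = ∑' n : ℕ, z ^ n / (n.factorial : ℂ) := by
  rw [Complex.exp_eq_exp_ℂ, NormedSpace.exp_eq_tsum_div]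

lemma norm_term (z : ℂ) (n : ℕ) : ‖z ^ n / (n.factorial : ℂ)‖ = ‖z‖ ^ n / n.factorial := by
  rw [norm_div, norm_pow]
  congr 1
  simp

lemma summable_exp_series (z : ℂ) : Summable (fun n : ℕ => z ^ n / (n.factorial : ℂ)) := by
  apply Summable.of_norm
  simp only [norm_term]
  exact Real.summable_pow_div_factorial ‖z‖

lemma summable_shift (z : ℂ) : Summable (fun n : ℕ => z ^ n / ((n+1).factorial : ℂ)) := by
  apply Summable.of_norm
  have : ∀ n : ℕ, ‖z ^ n / ((n+1).factorial : ℂ)‖ = ‖z‖ ^ n / (n+1).factorial := fun n => by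
    rw [norm_div, norm_pow]; congr 1; simp
  simp only [this]
  apply Summable.of_nonneg_of_le (fun n => by positivity) (fun n => ?_)
    (Real.summable_pow_div_factorial ‖z‖)
  apply div_le_div_of_nonneg_left (by positivity) (by positivity)
  exact_mod_cast Nat.factorial_le (Nat.le_succ n)

lemma tsum_shift_eq (z : ℂ) (hz : z ≠ 0) :
    ∑' n : ℕ, z ^ n / ((n+1).factorial : ℂ) = (Complex.exp z - 1) / z := by
  have h1 : z * ∑' n : ℕ, z ^ n / ((n+1).factorial : ℂ)
      = ∑' n : ℕ, z ^ (n+1) / ((n+1).factorial : ℂ) := by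
    rw [← tsum_mul_left]
    apply tsum_congr; intro n
    rw [pow_succ]; ring
  have h2 : Complex.exp z = 1 + ∑' n : ℕ, z ^ (n+1) / ((n+1).factorial : ℂ) := by
    rw [exp_tsum, Summable.tsum_eq_zero_add (summable_exp_series z)]
    simp
  rw [eq_div_iff hz, mul_comm, h1]
  rw [h2]; ring

/-- inner integral -/
lemma inner_eq (c y : ℝ) :
    (∫ x in (0:ℝ)..(π/2),
        Complex.exp (Complex.I * (c * Real.sin x * Real.cos y)) * (Real.sin x : ℂ))
      = ∑' n : ℕ, (Complex.I * c) ^ n / (n.factorial : ℂ) * ((S (n+1) : ℝ) : ℂ)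
          * ((Real.cos y : ℝ) : ℂ) ^ n := by
  have hpt : ∀ x : ℝ, Complex.exp (Complex.I * (c * Real.sin x * Real.cos y)) * (Real.sin x : ℂ)
      = ∑' n : ℕ, (Complex.I * c * Real.cos y) ^ n / (n.factorial : ℂ) * (Real.sin x : ℂ) ^ (n+1) := by
    intro x
    rw [exp_tsum, ← tsum_mul_right]
    apply tsum_congr
    intro n
    have h : Complex.I * ((c:ℂ) * Real.sin x * Real.cos y)
        = (Complex.I * c * Real.cos y) * Real.sin x := by ring
    rw [h, mul_pow, pow_succ]
    ring
  simp only [hpt]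
  rw [swap_tsum _ ?cont (fun n => |c| ^ n / n.factorial) (Real.summable_pow_div_factorial _)
      ?bound]
  case cont => intro n; fun_prop
  case bound =>
    intro n x
    rw [norm_mul, norm_div, norm_pow]
    have h1 : ‖Complex.I * (c:ℂ) * (Real.cos y : ℂ)‖ ≤ |c| := by
      rw [norm_mul, norm_mul, Complex.norm_I, one_mul, Complex.norm_real, Complex.norm_real]
      calc |c| * |Real.cos y| ≤ |c| * 1 :=
        mul_le_mul_of_nonneg_left (abs_le_one_iff_mul_self_le_one.mpr
          (by nlinarith [Real.neg_one_le_cos y, Real.cos_le_one y])) (abs_nonneg c)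
      _ = |c| := mul_one _
    have h2 : ‖((Real.sin x : ℝ) : ℂ) ^ (n+1)‖ ≤ 1 := by
      rw [norm_pow, Complex.norm_real]
      exact pow_le_one₀ (abs_nonneg _) (Real.abs_sin_le_one x)
    have h3 : ‖((n.factorial : ℕ) : ℂ)‖ = (n.factorial : ℝ) := by simp
    calc ‖Complex.I * (c:ℂ) * (Real.cos y:ℂ)‖ ^ n / ‖((n.factorial : ℕ) : ℂ)‖
          * ‖((Real.sin x : ℝ):ℂ) ^ (n+1)‖
        ≤ |c| ^ n / (n.factorial : ℝ) * 1 := by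
          rw [h3]
          apply mul_le_mul _ h2 (norm_nonneg _) (by positivity)
          apply div_le_div_of_nonneg_right _ (by positivity)
          exact pow_le_pow_left₀ (norm_nonneg _) h1 n
      _ = |c| ^ n / n.factorial := mul_one _
  apply tsum_congr
  intro n
  rw [intervalIntegral.integral_const_mul]
  have : ∀ x : ℝ, ((Real.sin x : ℝ) : ℂ) ^ (n+1) = ((Real.sin x ^ (n+1) : ℝ) : ℂ) := by
    intro x; push_cast; ring
  simp only [this]
  rw [intervalIntegral.integral_ofReal]
  rw [show ((S (n+1) : ℝ) : ℂ) = ((∫ x in (0:ℝ)..(π/2), Real.sin x ^ (n+1) : ℝ) : ℂ) from rfl]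
  rw [mul_pow, mul_pow]
  ring

end QDI

namespace QDI2
open QDI MeasureTheory intervalIntegral

lemma norm_bound (c : ℝ) (n : ℕ) (y : ℝ) :
    ‖(Complex.I * c) ^ n / (n.factorial : ℂ) * ((S (n+1):ℝ):ℂ) * ((Real.cos y : ℝ):ℂ) ^ n‖
      ≤ |c| ^ n / n.factorial * (π/2) := by
  rw [norm_mul, norm_mul, norm_div, norm_pow, norm_pow]
  have e1 : ‖Complex.I * (c:ℂ)‖ = |c| := by
    rw [norm_mul, Complex.norm_I, one_mul, Complex.norm_real]; rfl
  have e2 : ‖((n.factorial : ℕ) : ℂ)‖ = (n.factorial : ℝ) := by simp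
  have e3 : ‖((S (n+1) : ℝ) : ℂ)‖ ≤ π/2 := by
    rw [Complex.norm_real, Real.norm_eq_abs, _root_.abs_of_nonneg (S_nonneg _)]
    exact S_le _
  have e4 : ‖((Real.cos y : ℝ) : ℂ)‖ ^ n ≤ 1 := by
    rw [Complex.norm_real]
    exact pow_le_one₀ (abs_nonneg _) (Real.abs_cos_le_one y)
  rw [e1, e2]
  calc |c| ^ n / (n.factorial:ℝ) * ‖((S (n+1):ℝ):ℂ)‖ * ‖((Real.cos y:ℝ):ℂ)‖ ^ n
      ≤ |c| ^ n / (n.factorial:ℝ) * (π/2) * 1 := by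
        apply mul_le_mul _ e4 (by positivity) (by positivity)
        exact mul_le_mul_of_nonneg_left e3 (by positivity)
    _ = |c| ^ n / n.factorial * (π/2) := mul_one _

lemma outer_eq (c : ℝ) :
    (∫ y in (0:ℝ)..(π/2), ∑' n : ℕ, (Complex.I * c) ^ n / (n.factorial : ℂ) * ((S (n+1):ℝ):ℂ)
        * ((Real.cos y : ℝ):ℂ) ^ n)
      = ∑' n : ℕ, (Complex.I * c) ^ n / (n.factorial : ℂ) * ((S (n+1):ℝ):ℂ) * ((S n : ℝ):ℂ) := by
  rw [swap_tsum _ ?cont (fun n => |c| ^ n / n.factorial * (π/2))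
      ((Real.summable_pow_div_factorial _).mul_right _) (fun n y => norm_bound c n y)]
  case cont => intro n; fun_prop
  apply tsum_congr; intro n
  rw [intervalIntegral.integral_const_mul]
  congr 1
  have : ∀ y : ℝ, ((Real.cos y : ℝ):ℂ) ^ n = ((Real.cos y ^ n : ℝ) : ℂ) := by
    intro y; push_cast; ring
  simp only [this]
  rw [intervalIntegral.integral_ofReal, cos_pow_int]

lemma total (c : ℝ) (hc : c ≠ 0) :
    (∑' n : ℕ, (Complex.I * c) ^ n / (n.factorial : ℂ) * ((S (n+1):ℝ):ℂ) * ((S n:ℝ):ℂ))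
      = (π/2 : ℂ) * (Complex.exp (Complex.I * c) - 1) / (Complex.I * c) := by
  have h1 : ∀ n : ℕ, (Complex.I * c) ^ n / (n.factorial : ℂ) * ((S (n+1):ℝ):ℂ) * ((S n:ℝ):ℂ)
      = (π/2 : ℂ) * ((Complex.I * c) ^ n / (((n+1).factorial : ℕ) : ℂ)) := by
    intro n
    have h2 : ((S (n+1):ℝ):ℂ) * ((S n:ℝ):ℂ) = ((π / (2*(n+1)) : ℝ) : ℂ) := by
      rw [← Complex.ofReal_mul, mul_comm, S_mul]
    rw [mul_assoc, h2, Nat.factorial_succ]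
    have hf : ((n.factorial : ℕ) : ℂ) ≠ 0 := by
      exact_mod_cast Nat.cast_ne_zero.mpr (Nat.factorial_ne_zero n)
    have hn : ((n:ℂ) + 1) ≠ 0 := by
      exact Nat.cast_add_one_ne_zero n
    push_cast
    field_simp
  simp only [h1]
  rw [tsum_mul_left, tsum_shift_eq _ (mul_ne_zero Complex.I_ne_zero (Complex.ofReal_ne_zero.2 hc)),
    mul_div_assoc]

end QDI2

namespace QDI3
open QDI QDI2 MeasureTheory intervalIntegral

lemma trig (α : ℝ) (hα : 0 < α) :
    (π/2 : ℂ) * (Complex.exp (Complex.I * ((2*π*α : ℝ) : ℂ)) - 1) / (Complex.I * ((2*π*α : ℝ):ℂ))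
      = (π / 2 : ℂ) * Complex.exp (Complex.I * π * α) * ((_root_.sinc α : ℝ) : ℂ) := by
  have hw : (π*α : ℝ) ≠ 0 := by positivity
  have hIc : Complex.I * ((2*π*α : ℝ) : ℂ) ≠ 0 :=
    mul_ne_zero Complex.I_ne_zero (Complex.ofReal_ne_zero.2 (by positivity))
  rw [div_eq_iff hIc]
  have e1 : Complex.I * ((2*π*α : ℝ):ℂ) = ((2*π*α : ℝ):ℂ) * Complex.I := mul_comm _ _
  have e2 : Complex.I * (π:ℂ) * (α:ℂ) = ((π*α : ℝ):ℂ) * Complex.I := by push_cast; ring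
  rw [e1, e2, Complex.exp_mul_I, Complex.exp_mul_I,
    ← Complex.ofReal_cos, ← Complex.ofReal_sin, ← Complex.ofReal_cos, ← Complex.ofReal_sin]
  have hsin : Real.sin (2*π*α) = 2 * Real.sin (π*α) * Real.cos (π*α) := by
    rw [show (2*π*α : ℝ) = 2*(π*α) by ring, Real.sin_two_mul]
  have hcos : Real.cos (2*π*α) = 1 - 2 * Real.sin (π*α)^2 := by
    rw [show (2*π*α : ℝ) = 2*(π*α) by ring, Real.cos_two_mul]
    nlinarith [Real.sin_sq_add_cos_sq (π*α)]
  rw [hsin, hcos]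
  simp only [_root_.sinc]
  have hwC : ((π:ℂ)*(α:ℂ)) ≠ 0 := by
    have := Complex.ofReal_ne_zero.2 hw; push_cast at this; exact this
  push_cast
  field_simp
  ring_nf
  simp only [Complex.I_sq]
  ring_nf
  have hα0 : (α:ℂ) ≠ 0 := by exact_mod_cast hα.ne'
  linear_combination (-(Complex.sin (↑π * ↑α) * Complex.cos (↑π * ↑α) * I * 2 - Complex.sin (↑π * ↑α) ^ 2 * 2)) * mul_inv_cancel₀ hα0

end QDI3

namespace QDI4
open QDI QDI2 QDI3 MeasureTheory intervalIntegral

noncomputable def G (c y : ℝ) : ℂ :=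
  ∑' n : ℕ, (Complex.I * c) ^ n / (n.factorial : ℂ) * ((S (n+1):ℝ):ℂ) * ((Real.cos y : ℝ):ℂ) ^ n

lemma G_cont (c : ℝ) : Continuous (G c) := by
  apply continuous_tsum (fun n => by fun_prop)
    ((Real.summable_pow_div_factorial |c|).mul_right (π/2)) (fun n y => norm_bound c n y)

lemma inner_eq' (c y : ℝ) :
    (∫ x in (0:ℝ)..(π/2),
        Complex.exp (Complex.I * ((c:ℂ) * Real.sin x * Real.cos y)) * (Real.sin x : ℂ)) = G c y :=
  inner_eq c y

lemma G_integral (c : ℝ) (hc : c ≠ 0) :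
    (∫ y in (0:ℝ)..(π/2), G c y)
      = (π/2 : ℂ) * (Complex.exp (Complex.I * c) - 1) / (Complex.I * c) := by
  rw [show (fun y => G c y) = fun y => ∑' n : ℕ, (Complex.I * c) ^ n / (n.factorial : ℂ)
      * ((S (n+1):ℝ):ℂ) * ((Real.cos y : ℝ):ℂ) ^ n from rfl]
  rw [outer_eq, total c hc]

lemma hsplit (c y : ℝ) :
    (∫ x in (0:ℝ)..(π/2),
        Complex.exp (Complex.I * ((c:ℂ) * Real.sin x * Real.cos y)) * (Real.sin x : ℂ))
      = ((∫ x in (0:ℝ)..(π/2), Real.cos (c * Real.sin x * Real.cos y) * Real.sin x : ℝ) : ℂ)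
        + ((∫ x in (0:ℝ)..(π/2), Real.sin (c * Real.sin x * Real.cos y) * Real.sin x : ℝ) : ℂ)
          * Complex.I := by
  have hpt : ∀ x : ℝ,
      Complex.exp (Complex.I * ((c:ℂ) * Real.sin x * Real.cos y)) * (Real.sin x : ℂ)
      = ((Real.cos (c * Real.sin x * Real.cos y) * Real.sin x : ℝ):ℂ)
        + ((Real.sin (c * Real.sin x * Real.cos y) * Real.sin x : ℝ):ℂ) * Complex.I := by
    intro x
    have h1 : Complex.I * ((c:ℂ) * Real.sin x * Real.cos y)
        = ((c * Real.sin x * Real.cos y : ℝ):ℂ) * Complex.I := by push_cast; ring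
    rw [h1, Complex.exp_mul_I, ← Complex.ofReal_cos, ← Complex.ofReal_sin]
    push_cast; ring
  simp only [hpt]
  rw [intervalIntegral.integral_add ?i1 ?i2]
  case i1 => apply Continuous.intervalIntegrable; fun_prop
  case i2 => apply Continuous.intervalIntegrable; fun_prop
  rw [intervalIntegral.integral_mul_const, intervalIntegral.integral_ofReal,
    intervalIntegral.integral_ofReal]

lemma hFc (c y : ℝ) :
    (∫ x in (0:ℝ)..(π/2), Real.cos (c * Real.sin x * Real.cos y) * Real.sin x)
      = (G c y).re := by
  rw [← inner_eq' c y, hsplit c y]; simp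

lemma hFs (c y : ℝ) :
    (∫ x in (0:ℝ)..(π/2), Real.sin (c * Real.sin x * Real.cos y) * Real.sin x)
      = (G c y).im := by
  rw [← inner_eq' c y, hsplit c y]; simp

lemma houter (c : ℝ) :
    (∫ y in (0:ℝ)..(π/2), G c y)
      = ((∫ y in (0:ℝ)..(π/2), (G c y).re : ℝ):ℂ)
        + ((∫ y in (0:ℝ)..(π/2), (G c y).im : ℝ):ℂ) * Complex.I := by
  have hpt : Set.EqOn (fun y => G c y)
      (fun y => (((G c y).re : ℝ):ℂ) + (((G c y).im : ℝ):ℂ) * Complex.I)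
      (Set.uIcc 0 (π/2)) := fun y _ => (Complex.re_add_im (G c y)).symm
  rw [intervalIntegral.integral_congr hpt]
  have hre : Continuous fun y => (((G c y).re : ℝ) : ℂ) :=
    Complex.continuous_ofReal.comp (Complex.continuous_re.comp (G_cont c))
  have him : Continuous fun y => (((G c y).im : ℝ) : ℂ) :=
    Complex.continuous_ofReal.comp (Complex.continuous_im.comp (G_cont c))
  rw [intervalIntegral.integral_add (hre.intervalIntegrable _ _)
    (show IntervalIntegrable (fun y => (((G c y).im : ℝ) : ℂ) * Complex.I) volume 0 (π/2) from (him.mul continuous_const).intervalIntegrable _ _)]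
  rw [intervalIntegral.integral_mul_const, intervalIntegral.integral_ofReal,
    intervalIntegral.integral_ofReal]

lemma hRsplit (α : ℝ) :
    (π / 2 : ℂ) * Complex.exp (Complex.I * π * α) * ((_root_.sinc α : ℝ):ℂ)
      = (((π/2) * Real.cos (π*α) * _root_.sinc α : ℝ):ℂ)
        + (((π/2) * Real.sin (π*α) * _root_.sinc α : ℝ):ℂ) * Complex.I := by
  have e2 : Complex.I * (π:ℂ) * (α:ℂ) = ((π*α : ℝ):ℂ) * Complex.I := by push_cast; ring
  rw [e2, Complex.exp_mul_I, ← Complex.ofReal_cos, ← Complex.ofReal_sin]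
  push_cast; ring

end QDI4

/-- The quarter-domain oscillatory integral `h(α)` of Appendix C equals
`(π/2) e^{iπα} sinc(α)`, in real and complex form. -/
theorem quarter_domain_integral (α : ℝ) (hα : 0 < α) :
    (∫ y in (0 : ℝ)..(π / 2), ∫ x in (0 : ℝ)..(π / 2),
        Real.cos (2 * π * α * Real.sin x * Real.cos y) * Real.sin x) =
      (π / 2) * Real.cos (π * α) * _root_.sinc α ∧
    (∫ y in (0 : ℝ)..(π / 2), ∫ x in (0 : ℝ)..(π / 2),
        Real.sin (2 * π * α * Real.sin x * Real.cos y) * Real.sin x) =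
      (π / 2) * Real.sin (π * α) * _root_.sinc α ∧
    (∫ y in (0 : ℝ)..(π / 2), ∫ x in (0 : ℝ)..(π / 2),
        Complex.exp (Complex.I * (2 * π * α * Real.sin x * Real.cos y))
          * (Real.sin x)) =
      (π / 2 : ℂ) * Complex.exp (Complex.I * π * α) * (_root_.sinc α : ℂ) := by
  have hcast : ∀ x y : ℝ, Complex.I * (2 * (π:ℂ) * (α:ℂ) * (Real.sin x : ℂ) * (Real.cos y : ℂ))
      = Complex.I * (((2*π*α : ℝ):ℂ) * (Real.sin x : ℂ) * (Real.cos y : ℂ)) := by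
    intro x y; push_cast; ring
  simp only [hcast]
  set c : ℝ := 2*π*α with hc
  have hcne : c ≠ 0 := by rw [hc]; positivity
  have htrig := QDI3.trig α hα
  rw [← hc] at htrig
  have hcplx : (∫ y in (0:ℝ)..(π/2), ∫ x in (0:ℝ)..(π/2),
      Complex.exp (Complex.I * ((c:ℂ) * Real.sin x * Real.cos y)) * (Real.sin x : ℂ))
      = (π / 2 : ℂ) * Complex.exp (Complex.I * π * α) * ((_root_.sinc α : ℝ):ℂ) := by
    rw [intervalIntegral.integral_congr (fun y _ => QDI4.inner_eq' c y), QDI4.G_integral c hcne, htrig]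
  have hmain : ((∫ y in (0:ℝ)..(π/2), (QDI4.G c y).re : ℝ):ℂ)
      + ((∫ y in (0:ℝ)..(π/2), (QDI4.G c y).im : ℝ):ℂ) * Complex.I
      = (((π/2) * Real.cos (π*α) * _root_.sinc α : ℝ):ℂ)
        + (((π/2) * Real.sin (π*α) * _root_.sinc α : ℝ):ℂ) * Complex.I := by
    rw [← QDI4.houter c, QDI4.G_integral c hcne, htrig, QDI4.hRsplit]
  have h1 : (∫ y in (0:ℝ)..(π/2), (QDI4.G c y).re) = (π/2) * Real.cos (π*α) * _root_.sinc α := by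
    have := congrArg Complex.re hmain
    simpa [← Complex.ofReal_mul, Complex.cos_ofReal_re, Complex.cos_ofReal_im, Complex.sin_ofReal_re,
      Complex.sin_ofReal_im] using this
  have h2 : (∫ y in (0:ℝ)..(π/2), (QDI4.G c y).im) = (π/2) * Real.sin (π*α) * _root_.sinc α := by
    have := congrArg Complex.im hmain
    simpa [← Complex.ofReal_mul, Complex.cos_ofReal_re, Complex.cos_ofReal_im, Complex.sin_ofReal_re,
      Complex.sin_ofReal_im] using this
  refine ⟨?_, ?_, ?_⟩
  · rw [intervalIntegral.integral_congr (fun y _ => QDI4.hFc c y)]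
    exact h1
  · rw [intervalIntegral.integral_congr (fun y _ => QDI4.hFs c y)]
    exact h2
  · exact hcplx
end

section
/- For every f ∈ (0, 1), ∫_0^{arccos f} f / (cos y · sqrt(cos^2 y − f^2)) dy = π/2. -/
open Real

/-- Key inner integral identity (equation (70), Appendix C). -/
theorem inner_integral_pi_half (f : ℝ) (hf : f ∈ Set.Ioo (0 : ℝ) 1) :
    (∫ y in (0 : ℝ)..(Real.arccos f),
        f / (Real.cos y * Real.sqrt (Real.cos y ^ 2 - f ^ 2))) = π / 2 := by
  obtain ⟨hf0, hf1⟩ := hf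
  set b := Real.arccos f with hbdef
  have hb0 : 0 < b := Real.arccos_pos.2 hf1
  have hblt : b < π / 2 := Real.arccos_lt_pi_div_two.2 hf0
  have hcosb : Real.cos b = f := Real.cos_arccos (by linarith) (by linarith)
  set c := Real.sqrt (1 - f ^ 2) with hcdef
  have hc0 : 0 < c := Real.sqrt_pos.2 (by nlinarith)
  have hc2 : c ^ 2 = 1 - f ^ 2 := Real.sq_sqrt (by nlinarith)
  set F : ℝ → ℝ := fun y => Real.arcsin (f / c * Real.tan y) with hFdef
  clear_value b c F
  have hpi := Real.pi_pos
  -- cos positive on [0, b]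
  have hcospos : ∀ y ∈ Set.Icc (0:ℝ) b, 0 < Real.cos y := fun y hy =>
    Real.cos_pos_of_mem_Ioo ⟨by linarith [hy.1], by linarith [hy.2]⟩
  -- cos y > f on [0, b)
  have hcosgt : ∀ y ∈ Set.Ico (0:ℝ) b, f < Real.cos y := by
    intro y hy
    have := Real.cos_lt_cos_of_nonneg_of_le_pi hy.1 (by linarith) hy.2
    rwa [hcosb] at this
  -- continuity of F on [0, b]
  have hcont : ContinuousOn F (Set.Icc 0 b) := by
    rw [hFdef]
    apply Real.continuous_arcsin.comp_continuousOn
    apply ContinuousOn.mul continuousOn_const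
    intro y hy
    exact (Real.continuousAt_tan.2 (ne_of_gt (hcospos y hy))).continuousWithinAt
  -- derivative of F on (0, b)
  have hderiv : ∀ y ∈ Set.Ioo (0:ℝ) b,
      HasDerivAt F (f / (Real.cos y * Real.sqrt (Real.cos y ^ 2 - f ^ 2))) y := by
    intro y hy
    rw [hFdef]
    have hcy : 0 < Real.cos y := hcospos y ⟨hy.1.le, hy.2.le⟩
    have hfy : f < Real.cos y := hcosgt y ⟨hy.1.le, hy.2⟩
    have hsy : 0 ≤ Real.sin y := Real.sin_nonneg_of_nonneg_of_le_pi hy.1.le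
      (by linarith [hy.2])
    have hsc : Real.sin y ^ 2 + Real.cos y ^ 2 = 1 := Real.sin_sq_add_cos_sq y
    have hccpos : 0 < c * Real.cos y := mul_pos hc0 hcy
    have htan : HasDerivAt Real.tan (1 / Real.cos y ^ 2) y :=
      Real.hasDerivAt_tan (ne_of_gt hcy)
    have hg : HasDerivAt (fun z => f / c * Real.tan z) (f / c * (1 / Real.cos y ^ 2)) y :=
      htan.const_mul _
    have htaneq : Real.tan y = Real.sin y / Real.cos y := Real.tan_eq_sin_div_cos y
    -- the argument of arcsin lies in [0, 1)
    have hval : f / c * Real.tan y = f * Real.sin y / (c * Real.cos y) := by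
      rw [htaneq]; field_simp
    have hlt : f * Real.sin y < c * Real.cos y := by
      have h1 : (f * Real.sin y) ^ 2 < (c * Real.cos y) ^ 2 := by nlinarith
      exact lt_of_pow_lt_pow_left₀ 2 hccpos.le h1
    have hargnn : 0 ≤ f / c * Real.tan y := by
      rw [hval]
      exact div_nonneg (mul_nonneg hf0.le hsy) hccpos.le
    have harglt : f / c * Real.tan y < 1 := by
      rw [hval, div_lt_one hccpos]; exact hlt
    have harcsin : HasDerivAt Real.arcsin
        (1 / Real.sqrt (1 - (f / c * Real.tan y) ^ 2)) (f / c * Real.tan y) :=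
      Real.hasDerivAt_arcsin (by linarith) (ne_of_lt harglt)
    have hF : HasDerivAt (fun z => Real.arcsin (f / c * Real.tan z))
        (1 / Real.sqrt (1 - (f / c * Real.tan y) ^ 2) * (f / c * (1 / Real.cos y ^ 2))) y :=
      by have := harcsin.comp y hg; exact this
    convert hF using 1
    have hcne : c ≠ 0 := ne_of_gt hc0
    have hcyne : Real.cos y ≠ 0 := ne_of_gt hcy
    have hcc : ((c * Real.cos y) ^ 2 : ℝ) ≠ 0 := pow_ne_zero 2 hccpos.ne'
    have key : 1 - (f / c * Real.tan y) ^ 2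
        = (Real.cos y ^ 2 - f ^ 2) / (c * Real.cos y) ^ 2 := by
      rw [htaneq, eq_div_iff hcc]
      have expand : f / c * (Real.sin y / Real.cos y) * (c * Real.cos y) = f * Real.sin y := by
        field_simp
      calc (1 - (f / c * (Real.sin y / Real.cos y)) ^ 2) * (c * Real.cos y) ^ 2
          = (c * Real.cos y) ^ 2
            - (f / c * (Real.sin y / Real.cos y) * (c * Real.cos y)) ^ 2 := by ring
        _ = (c * Real.cos y) ^ 2 - (f * Real.sin y) ^ 2 := by rw [expand]
        _ = Real.cos y ^ 2 - f ^ 2 := by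
            linear_combination Real.cos y ^ 2 * hc2 - f ^ 2 * hsc
    rw [key, Real.sqrt_div (by nlinarith) _, Real.sqrt_sq hccpos.le]
    have hs : 0 < Real.sqrt (Real.cos y ^ 2 - f ^ 2) := Real.sqrt_pos.2 (by nlinarith)
    rw [one_div_div]
    field_simp
  -- integrability of the integrand
  have hint : IntervalIntegrable
      (fun y => f / (Real.cos y * Real.sqrt (Real.cos y ^ 2 - f ^ 2))) MeasureTheory.volume 0 b := by
    set D := Real.sqrt (2 * b * f) with hDdef
    have hD0 : 0 < D := Real.sqrt_pos.2 (mul_pos (by linarith) hf0)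
    clear_value D
    have hBint : IntervalIntegrable
        (fun y => π / D * (b - y) ^ (-(1/2) : ℝ)) MeasureTheory.volume 0 b := by
      have h1 : IntervalIntegrable (fun x : ℝ => x ^ (-(1/2) : ℝ)) MeasureTheory.volume 0 b :=
        intervalIntegral.intervalIntegrable_rpow' (by norm_num)
      have h2 := (h1.comp_sub_left b).symm
      have e1 : b - b = 0 := by ring
      have e2 : b - 0 = b := by ring
      rw [e1, e2] at h2
      exact h2.const_mul (π / D)
    apply hBint.mono_fun'
    · apply Measurable.aestronglyMeasurable
      apply Measurable.div measurable_const
      exact (Real.measurable_cos.mul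
        (((Real.measurable_cos.pow_const 2).sub measurable_const).sqrt))
    · rw [Set.uIoc_of_le hb0.le]
      filter_upwards [MeasureTheory.ae_restrict_mem measurableSet_Ioc] with y hy
      rcases eq_or_lt_of_le hy.2 with heq | hyb
      · have hz : Real.sqrt (Real.cos y ^ 2 - f ^ 2) = 0 := by
          rw [heq, hcosb]; simp
        have hz2 : b - y = 0 := by rw [heq]; ring
        rw [hz, mul_zero, div_zero, norm_zero, hz2,
          Real.zero_rpow (by norm_num : (-(1/2) : ℝ) ≠ 0), mul_zero]
      · have hcy : 0 < Real.cos y := hcospos y ⟨hy.1.le, hyb.le⟩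
        have hfy : f < Real.cos y := hcosgt y ⟨hy.1.le, hyb⟩
        have hbylt : 0 < b - y := by linarith
        -- quantitative lower bound on cos y - f
        have hcoslb : 2 * b * (b - y) / π ^ 2 ≤ Real.cos y - f := by
          have hform : Real.cos y - f = 2 * Real.sin ((y + b) / 2) * Real.sin ((b - y) / 2) := by
            have h := Real.cos_sub_cos y b
            rw [hcosb] at h
            rw [h]
            have hneg : Real.sin ((y - b) / 2) = -Real.sin ((b - y) / 2) := by
              rw [← Real.sin_neg]; ring_nf
            rw [hneg]; ring
          have hs1 : b / π ≤ Real.sin ((y + b) / 2) := by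
            have h := Real.mul_le_sin (x := (y + b) / 2) (by linarith [hy.1])
              (by linarith [hy.1])
            have h2 : b / π ≤ 2 / π * ((y + b) / 2) := by
              have e : 2 / π * ((y + b) / 2) = (y + b) / π := by ring
              rw [e]
              gcongr
              linarith [hy.1]
            linarith
          have hs2 : (b - y) / π ≤ Real.sin ((b - y) / 2) := by
            have h := Real.mul_le_sin (x := (b - y) / 2) (by linarith) (by linarith [hy.1])
            have e : 2 / π * ((b - y) / 2) = (b - y) / π := by ring
            linarith [e ▸ h]
          have hbpi : 0 < b / π := div_pos hb0 hpi
          rw [hform]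
          have hmul := mul_le_mul hs1 hs2 (div_nonneg hbylt.le hpi.le)
            (by linarith)
          calc 2 * b * (b - y) / π ^ 2 = 2 * (b / π * ((b - y) / π)) := by ring
            _ ≤ 2 * (Real.sin ((y + b) / 2) * Real.sin ((b - y) / 2)) := by linarith
            _ = 2 * Real.sin ((y + b) / 2) * Real.sin ((b - y) / 2) := by ring
        have hsqlb : 2 * b * f * (b - y) / π ^ 2 ≤ Real.cos y ^ 2 - f ^ 2 := by
          have h1 : 2 * b * (b - y) / π ^ 2 * f ≤ (Real.cos y - f) * (Real.cos y + f) := by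
            apply mul_le_mul hcoslb (by linarith) hf0.le
            linarith
          calc 2 * b * f * (b - y) / π ^ 2
              = 2 * b * (b - y) / π ^ 2 * f := by ring
            _ ≤ (Real.cos y - f) * (Real.cos y + f) := h1
            _ = Real.cos y ^ 2 - f ^ 2 := by ring
        -- conclude the bound
        have hsqrtlb : D * Real.sqrt (b - y) / π ≤ Real.sqrt (Real.cos y ^ 2 - f ^ 2) := by
          have h := Real.sqrt_le_sqrt hsqlb
          rwa [Real.sqrt_div (mul_nonneg (mul_nonneg (mul_nonneg (by norm_num) hb0.le) hf0.le)
              hbylt.le) _,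
            Real.sqrt_mul (mul_nonneg (mul_nonneg (by norm_num) hb0.le) hf0.le),
            Real.sqrt_sq hpi.le, ← hDdef] at h
        have hsby : 0 < Real.sqrt (b - y) := Real.sqrt_pos.2 hbylt
        have hnn : 0 ≤ f / (Real.cos y * Real.sqrt (Real.cos y ^ 2 - f ^ 2)) :=
          div_nonneg hf0.le (mul_nonneg hcy.le (Real.sqrt_nonneg _))
        rw [Real.norm_of_nonneg hnn]
        have hrpow : (b - y) ^ (-(1/2) : ℝ) = 1 / Real.sqrt (b - y) := by
          rw [Real.rpow_neg hbylt.le, Real.sqrt_eq_rpow, one_div]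
          norm_num
        rw [hrpow]
        have hXpos : 0 < D * Real.sqrt (b - y) / π :=
          div_pos (mul_pos hD0 hsby) hpi
        have hprod : f * (D * Real.sqrt (b - y) / π) ≤
            Real.cos y * Real.sqrt (Real.cos y ^ 2 - f ^ 2) :=
          mul_le_mul hfy.le hsqrtlb hXpos.le hcy.le
        calc f / (Real.cos y * Real.sqrt (Real.cos y ^ 2 - f ^ 2))
            ≤ f / (f * (D * Real.sqrt (b - y) / π)) :=
              div_le_div_of_nonneg_left hf0.le (mul_pos hf0 hXpos) hprod
          _ = π / D * (1 / Real.sqrt (b - y)) := by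
              rw [div_eq_iff (by positivity : (f * (D * Real.sqrt (b - y) / π)) ≠ 0)]
              field_simp
  -- apply FTC
  have hFTC := intervalIntegral.integral_eq_sub_of_hasDeriv_right_of_le hb0.le hcont
    (fun y hy => (hderiv y hy).hasDerivWithinAt) hint
  rw [hFTC]
  have hF0 : F 0 = 0 := by
    have e : F 0 = Real.arcsin (f / c * Real.tan 0) := by rw [hFdef]
    rw [e, Real.tan_zero, mul_zero, Real.arcsin_zero]
  have hFb : F b = π / 2 := by
    have htanb : Real.tan b = c / f := by
      rw [Real.tan_eq_sin_div_cos, hcosb, hbdef, Real.sin_arccos, hcdef]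
    have e : F b = Real.arcsin (f / c * Real.tan b) := by rw [hFdef]
    have e2 : f / c * (c / f) = 1 := by
      field_simp
    rw [e, htanb, e2, Real.arcsin_one]
  rw [hF0, hFb, sub_zero]
end

section
/- Let d be a random variable on [R_min, R] (0 < R_min < R) with density f(r) = 3r^2/(R^3 − R_min^3). Then for any real b, E[cos(b/d)] = (1/(2(R^3 − R_min^3))) · [ (2R^2 − b^2) R cos(b/R) − b R^2 sin(b/R) − b^3 Si(b/R) − (2R_min^2 − b^2) R_min cos(b/R_min) + b R_min^2 sin(b/R_min) + b^3 Si(b/R_min) ], where Si(x) = ∫_0^x (sin t)/t dt. -/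
open Real

/-- The sine integral `Si(x) = ∫_0^x sin t / t dt`. -/
noncomputable def Si (x : ℝ) : ℝ := ∫ t in (0 : ℝ)..x, Real.sin t / t

lemma sin_div_intervalIntegrable (a c : ℝ) :
    IntervalIntegrable (fun t => Real.sin t / t) MeasureTheory.volume a c := by
  apply IntervalIntegrable.mono_fun' (g := fun _ => (1:ℝ)) intervalIntegrable_const
  · exact (Real.measurable_sin.div measurable_id).aestronglyMeasurable
  · refine Filter.Eventually.of_forall fun t => ?_
    simp only [norm_div, Real.norm_eq_abs]
    rcases eq_or_ne t 0 with h | h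
    · simp [h]
    · rw [div_le_one (abs_pos.mpr h)]
      exact Real.abs_sin_le_abs

lemma hasDerivAt_Si {x : ℝ} (hx : x ≠ 0) : HasDerivAt Si (Real.sin x / x) x := by
  exact intervalIntegral.integral_hasDerivAt_right (sin_div_intervalIntegrable 0 x)
    ((Real.measurable_sin.div measurable_id).stronglyMeasurable.stronglyMeasurableAtFilter)
    ((Real.continuous_sin.continuousAt).div continuousAt_id hx)

lemma hasDerivAt_F (b : ℝ) (hb : b ≠ 0) {r : ℝ} (hr : 0 < r) :
    HasDerivAt (fun r : ℝ => (2 * r ^ 2 - b ^ 2) * r * Real.cos (b / r)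
        - b * r ^ 2 * Real.sin (b / r) - b ^ 3 * Si (b / r))
      (6 * r ^ 2 * Real.cos (b / r)) r := by
  have hrne : r ≠ 0 := hr.ne'
  have hu : HasDerivAt (fun r : ℝ => b / r) (-b / r ^ 2) r := by
    have := (hasDerivAt_inv hrne).const_mul b
    simpa [div_eq_mul_inv, neg_div] using this
  have hbr : b / r ≠ 0 := div_ne_zero hb hrne
  have hcos : HasDerivAt (fun r : ℝ => Real.cos (b / r))
      (-Real.sin (b / r) * (-b / r ^ 2)) r :=
    (Real.hasDerivAt_cos (b / r)).comp r hu
  have hsin : HasDerivAt (fun r : ℝ => Real.sin (b / r))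
      (Real.cos (b / r) * (-b / r ^ 2)) r :=
    (Real.hasDerivAt_sin (b / r)).comp r hu
  have hSi : HasDerivAt (fun r : ℝ => Si (b / r))
      ((Real.sin (b / r) / (b / r)) * (-b / r ^ 2)) r :=
    (hasDerivAt_Si hbr).comp r hu
  have hP : HasDerivAt (fun r : ℝ => (2 * r ^ 2 - b ^ 2) * r)
      ((2 * (2 * r) - 0) * r + (2 * r ^ 2 - b ^ 2) * 1) r := by
    have := (((hasDerivAt_pow 2 r).const_mul 2).sub_const (b ^ 2)).mul (hasDerivAt_id r)
    exact this.congr_deriv (by simp only [id]; norm_num)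
  have hQ : HasDerivAt (fun r : ℝ => b * r ^ 2) (b * (2 * r)) r := by
    have := (hasDerivAt_pow 2 r).const_mul b
    simpa using this
  have h := ((hP.mul hcos).sub (hQ.mul hsin)).sub (hSi.const_mul (b ^ 3))
  refine h.congr_deriv ?_
  field_simp
  ring

/-- Expectation of `cos(b/d)` for `d` with density `3r²/(R³ - R_min³)` on
`[R_min, R]` (equation (44)/(C(b)) of the paper). -/
theorem expectation_cos_radial
    (Rmin R b : ℝ) (h0 : 0 < Rmin) (hR : Rmin < R) :
    (∫ r in Rmin..R, Real.cos (b / r) * (3 * r ^ 2 / (R ^ 3 - Rmin ^ 3))) =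
      (1 / (2 * (R ^ 3 - Rmin ^ 3))) *
        ((2 * R ^ 2 - b ^ 2) * R * Real.cos (b / R)
          - b * R ^ 2 * Real.sin (b / R)
          - b ^ 3 * Si (b / R)
          - (2 * Rmin ^ 2 - b ^ 2) * Rmin * Real.cos (b / Rmin)
          + b * Rmin ^ 2 * Real.sin (b / Rmin)
          + b ^ 3 * Si (b / Rmin)) := by
  have hΔ : R ^ 3 - Rmin ^ 3 ≠ 0 := by
    have : Rmin ^ 3 < R ^ 3 := by
      apply pow_lt_pow_left₀ hR h0.le (by norm_num)
    linarith
  rcases eq_or_ne b 0 with hb | hb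
  · have hSi0 : Si 0 = 0 := by simp [Si]
    subst hb
    simp only [zero_div, Real.cos_zero, Real.sin_zero, one_mul, hSi0]
    rw [intervalIntegral.integral_div, intervalIntegral.integral_const_mul,
      integral_pow]
    field_simp
    ring
  · have key : (∫ r in Rmin..R, Real.cos (b / r) * (3 * r ^ 2 / (R ^ 3 - Rmin ^ 3))) =
        (fun r : ℝ => ((2 * r ^ 2 - b ^ 2) * r * Real.cos (b / r)
          - b * r ^ 2 * Real.sin (b / r) - b ^ 3 * Si (b / r)) / (2 * (R ^ 3 - Rmin ^ 3))) R
        - (fun r : ℝ => ((2 * r ^ 2 - b ^ 2) * r * Real.cos (b / r)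
          - b * r ^ 2 * Real.sin (b / r) - b ^ 3 * Si (b / r)) / (2 * (R ^ 3 - Rmin ^ 3))) Rmin := by
      apply intervalIntegral.integral_eq_sub_of_hasDerivAt
        (f := fun r : ℝ => ((2 * r ^ 2 - b ^ 2) * r * Real.cos (b / r)
          - b * r ^ 2 * Real.sin (b / r) - b ^ 3 * Si (b / r)) / (2 * (R ^ 3 - Rmin ^ 3)))
        (f' := fun r => Real.cos (b / r) * (3 * r ^ 2 / (R ^ 3 - Rmin ^ 3)))
      · intro x hx
        rw [Set.uIcc_of_le hR.le] at hx
        have hx0 : 0 < x := lt_of_lt_of_le h0 hx.1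
        have := (hasDerivAt_F b hb hx0).div_const (2 * (R ^ 3 - Rmin ^ 3))
        refine this.congr_deriv ?_
        field_simp
        ring
      · apply ContinuousOn.intervalIntegrable
        apply ContinuousOn.mul
        · exact Real.continuous_cos.comp_continuousOn
            (continuousOn_const.div continuousOn_id fun x hx => by
              rw [Set.uIcc_of_le hR.le] at hx
              exact (lt_of_lt_of_le h0 hx.1).ne')
        · exact (continuous_const.mul (continuous_pow 2)).continuousOn.div_const _
    rw [key]
    field_simp
    ring
end

section
/- Let X, Y be independent random variables where X has density sin(x) on [0, π/2] and Y is uniform on [0, π/2]. Then the random variable F = sin(X) cos(Y) is uniformly distributed on [0, 1], i.e., for every f ∈ (0,1), the density of F at f equals 1. -/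
open MeasureTheory Real Set

set_option maxHeartbeats 1000000 in
lemma deriv_aux (f : ℝ) (hf0 : 0 < f) (hf1 : f < 1) (y : ℝ)
    (hy0 : 0 ≤ y) (hyc : f < Real.cos y) (hy2 : y < π/2) :
    HasDerivAt (fun y => y - Real.arcsin (Real.sin y / Real.sqrt (1 - f^2))
      + f * Real.arcsin (f * Real.sin y / (Real.sqrt (1 - f^2) * Real.cos y)))
      (1 - Real.sqrt ((Real.cos y)^2 - f^2) / Real.cos y) y := by
  set b := Real.sqrt (1 - f^2) with hb
  have hb2 : b^2 = 1 - f^2 := Real.sq_sqrt (by nlinarith)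
  have hbpos : 0 < b := Real.sqrt_pos.2 (by nlinarith)
  have hcos : 0 < Real.cos y := lt_trans hf0 hyc
  have hsin : 0 ≤ Real.sin y := Real.sin_nonneg_of_nonneg_of_le_pi hy0 (by linarith [Real.pi_pos])
  have hkey : 0 < (Real.cos y)^2 - f^2 := by nlinarith
  have hsin2 : (Real.sin y)^2 = 1 - (Real.cos y)^2 := by
    have := Real.sin_sq_add_cos_sq y; nlinarith
  -- first arcsin term
  have h1w : HasDerivAt (fun y => Real.sin y / b) (Real.cos y / b) y :=
    (Real.hasDerivAt_sin y).div_const b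
  have hw1lt : Real.sin y / b < 1 := by
    rw [div_lt_one hbpos]
    nlinarith [Real.sqrt_nonneg (1 - f^2)]
  have hw1ge : (0:ℝ) ≤ Real.sin y / b := div_nonneg hsin hbpos.le
  have h1 : HasDerivAt (fun y => Real.arcsin (Real.sin y / b))
      ((1 / Real.sqrt (1 - (Real.sin y / b)^2)) * (Real.cos y / b)) y :=
    by have := HasDerivAt.comp y (Real.hasDerivAt_arcsin (x := Real.sin y / b) (by linarith) (ne_of_lt hw1lt)) h1w; exact this
  have e1 : Real.sqrt (1 - (Real.sin y / b)^2) = Real.sqrt ((Real.cos y)^2 - f^2) / b := by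
    rw [show 1 - (Real.sin y / b)^2 = ((Real.cos y)^2 - f^2) / b^2 by
      field_simp; nlinarith]
    rw [Real.sqrt_div hkey.le, Real.sqrt_sq hbpos.le]
  -- second arcsin term
  have h2w : HasDerivAt (fun y => f * Real.sin y / (b * Real.cos y))
      (f / (b * (Real.cos y)^2)) y := by
    have hnum : HasDerivAt (fun y => f * Real.sin y) (f * Real.cos y) y :=
      (Real.hasDerivAt_sin y).const_mul f
    have hden : HasDerivAt (fun y => b * Real.cos y) (b * (-Real.sin y)) y :=
      (Real.hasDerivAt_cos y).const_mul b
    have hd := hnum.div hden (by positivity)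
    refine hd.congr_deriv (Eq.symm ?_)
    rw [div_eq_div_iff (by positivity) (by positivity)]
    linear_combination (-(f * b^2 * Real.cos y^2)) * hsin2
  have hprod : f * Real.sin y < b * Real.cos y := by
    nlinarith [mul_pos hbpos hcos, mul_nonneg hf0.le hsin, hsin2, hb2, hkey]
  have hw2ge : (0:ℝ) ≤ f * Real.sin y / (b * Real.cos y) := by positivity
  have hw2lt : f * Real.sin y / (b * Real.cos y) < 1 := by
    rw [div_lt_one (by positivity)]; exact hprod
  have h2 : HasDerivAt (fun y => Real.arcsin (f * Real.sin y / (b * Real.cos y)))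
      ((1 / Real.sqrt (1 - (f * Real.sin y / (b * Real.cos y))^2)) * (f / (b * (Real.cos y)^2))) y :=
    by have := HasDerivAt.comp y (Real.hasDerivAt_arcsin (x := f * Real.sin y / (b * Real.cos y)) (by linarith) (ne_of_lt hw2lt)) h2w; exact this
  have e2 : Real.sqrt (1 - (f * Real.sin y / (b * Real.cos y))^2)
      = Real.sqrt ((Real.cos y)^2 - f^2) / (b * Real.cos y) := by
    rw [show 1 - (f * Real.sin y / (b * Real.cos y))^2 = ((Real.cos y)^2 - f^2) / (b * Real.cos y)^2 by
      field_simp; nlinarith]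
    rw [Real.sqrt_div hkey.le, Real.sqrt_sq (by positivity)]
  have hfin := ((hasDerivAt_id y).sub h1).add ((h2.const_mul f))
  refine hfin.congr_deriv (Eq.symm ?_)
  rw [e1, e2]
  have hsq : 0 < Real.sqrt ((Real.cos y)^2 - f^2) := Real.sqrt_pos.2 hkey
  have hs2 : (Real.sqrt ((Real.cos y)^2 - f^2))^2 = (Real.cos y)^2 - f^2 := Real.sq_sqrt hkey.le
  field_simp
  linear_combination (-1 : ℝ) * hs2

lemma piece1 (f : ℝ) (hf0 : 0 < f) (hf1 : f < 1) :
    ∫ y in (0:ℝ)..(Real.arccos f), (1 - Real.sqrt ((Real.cos y)^2 - f^2) / Real.cos y)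
      = Real.arccos f - π/2 + f * (π/2) := by
  set a := Real.arccos f with ha
  have ha0 : 0 ≤ a := Real.arccos_nonneg f
  have ha2 : a < π/2 := Real.arccos_lt_pi_div_two.2 hf0
  have hb : Real.sqrt (1 - f^2) > 0 := Real.sqrt_pos.2 (by nlinarith)
  have hcos_pos : ∀ y ∈ Icc (0:ℝ) a, 0 < Real.cos y := fun y hy =>
    Real.cos_pos_of_mem_Ioo ⟨by linarith [hy.1, Real.pi_pos], lt_of_le_of_lt hy.2 ha2⟩
  have hcosa : Real.cos a = f := Real.cos_arccos (by linarith) (by linarith)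
  have hsina : Real.sin a = Real.sqrt (1 - f^2) := by
    rw [ha, Real.sin_arccos]
  set G := fun y => y - Real.arcsin (Real.sin y / Real.sqrt (1 - f^2))
      + f * Real.arcsin (f * Real.sin y / (Real.sqrt (1 - f^2) * Real.cos y)) with hG
  have hcont : ContinuousOn G (Icc 0 a) := by
    refine (continuousOn_id.sub ?_).add (continuousOn_const.mul ?_)
    · exact (Real.continuous_arcsin.comp (Real.continuous_sin.div_const _)).continuousOn
    · exact Real.continuous_arcsin.comp_continuousOn
        (((continuous_const.mul Real.continuous_sin).continuousOn).div
        ((continuous_const.mul Real.continuous_cos).continuousOn)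
        (fun y hy => by have := hcos_pos y hy; positivity))
  have hderiv : ∀ y ∈ Ioo (0:ℝ) a, HasDerivAt G
      (1 - Real.sqrt ((Real.cos y)^2 - f^2) / Real.cos y) y := by
    intro y hy
    have hyc : f < Real.cos y := by
      rw [← hcosa]
      exact Real.cos_lt_cos_of_nonneg_of_le_pi hy.1.le (by linarith [Real.pi_pos]) hy.2
    exact deriv_aux f hf0 hf1 y hy.1.le hyc (lt_trans hy.2 ha2)
  have hInt : IntervalIntegrable
      (fun y => 1 - Real.sqrt ((Real.cos y)^2 - f^2) / Real.cos y) volume 0 a := by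
    apply ContinuousOn.intervalIntegrable
    rw [uIcc_of_le ha0]
    apply ContinuousOn.sub continuousOn_const
    exact ((Real.continuous_cos.pow 2).sub continuous_const).sqrt.continuousOn.div
      Real.continuous_cos.continuousOn (fun y hy => (hcos_pos y hy).ne')
  have := intervalIntegral.integral_eq_sub_of_hasDerivAt_of_le ha0 hcont hderiv hInt
  rw [this, hG]
  simp only [hsina, hcosa, Real.sin_zero]
  rw [div_self hb.ne', show f * Real.sqrt (1 - f^2) / (Real.sqrt (1 - f^2) * f)
      = 1 by field_simp]
  simp [Real.arcsin_one]

lemma key_integral (f : ℝ) (hf0 : 0 < f) (hf1 : f < 1) :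
    ∫ y in (0:ℝ)..(π/2), (1 - Real.sqrt (1 - (min 1 (f / Real.cos y))^2))
      = π/2 * f := by
  set a := Real.arccos f with ha
  have ha0 : 0 ≤ a := Real.arccos_nonneg f
  have ha2 : a < π/2 := Real.arccos_lt_pi_div_two.2 hf0
  have hcosa : Real.cos a = f := Real.cos_arccos (by linarith) (by linarith)
  set g := fun y => 1 - Real.sqrt (1 - (min 1 (f / Real.cos y))^2) with hg
  -- on [0,a], g = nice continuous function
  have heq1 : EqOn g (fun y => 1 - Real.sqrt ((Real.cos y)^2 - f^2) / Real.cos y) (uIcc 0 a) := by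
    intro y hy
    rw [uIcc_of_le ha0] at hy
    have hcos : 0 < Real.cos y :=
      Real.cos_pos_of_mem_Ioo ⟨by linarith [hy.1, Real.pi_pos], lt_of_le_of_lt hy.2 ha2⟩
    have hfc : f ≤ Real.cos y := by
      rw [← hcosa]
      exact Real.cos_le_cos_of_nonneg_of_le_pi hy.1 (by linarith [Real.pi_pos]) hy.2
    have hmin : min 1 (f / Real.cos y) = f / Real.cos y :=
      min_eq_right ((div_le_one hcos).2 hfc)
    simp only [hg, hmin]
    congr 1
    rw [show 1 - (f / Real.cos y)^2 = ((Real.cos y)^2 - f^2) / (Real.cos y)^2 by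
      field_simp, Real.sqrt_div (by nlinarith) , Real.sqrt_sq hcos.le]
  have hcont1 : ContinuousOn (fun y => 1 - Real.sqrt ((Real.cos y)^2 - f^2) / Real.cos y)
      (uIcc 0 a) := by
    rw [uIcc_of_le ha0]
    apply ContinuousOn.sub continuousOn_const
    exact ((Real.continuous_cos.pow 2).sub continuous_const).sqrt.continuousOn.div
      Real.continuous_cos.continuousOn
      (fun y hy => (Real.cos_pos_of_mem_Ioo
        ⟨by linarith [hy.1, Real.pi_pos], lt_of_le_of_lt hy.2 ha2⟩).ne')
  have hInt1 : IntervalIntegrable g volume 0 a := by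
    apply (hcont1.intervalIntegrable).congr_ae
    exact (ae_restrict_mem measurableSet_uIoc).mono
      (fun y hy => (heq1 (uIoc_subset_uIcc hy)).symm)
  -- on [a, π/2], g = 1 a.e.
  have hne : ∀ᵐ (x : ℝ) ∂(volume : Measure ℝ), x ≠ π/2 := by
    refine ae_iff.2 ?_
    simpa using Real.volume_singleton
  have heq2 : ∀ᵐ (x : ℝ) ∂(volume : Measure ℝ), x ∈ Set.uIoc a (π/2) → g x = 1 := by
    filter_upwards [hne] with x hx hxI
    rw [uIoc_of_le ha2.le] at hxI
    have hx2 : x < π/2 := lt_of_le_of_ne hxI.2 hx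
    have hcos : 0 < Real.cos x :=
      Real.cos_pos_of_mem_Ioo ⟨by linarith [hxI.1, Real.pi_pos], hx2⟩
    have hcf : Real.cos x ≤ f := by
      rw [← hcosa]
      exact Real.cos_le_cos_of_nonneg_of_le_pi ha0 (by linarith [Real.pi_pos]) hxI.1.le
    have hmin : min 1 (f / Real.cos x) = 1 := min_eq_left ((one_le_div hcos).2 hcf)
    simp [hg, hmin]
  have hInt2 : IntervalIntegrable g volume a (π/2) := by
    apply (intervalIntegrable_const (c := (1:ℝ))).congr_ae
    have h2' : ∀ᵐ x ∂(volume.restrict (Set.uIoc a (π/2))), g x = 1 :=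
      (ae_restrict_iff' measurableSet_uIoc).2 heq2
    exact h2'.mono fun x hx => hx.symm
  have hsplit := intervalIntegral.integral_add_adjacent_intervals hInt1 hInt2
  rw [← hsplit]
  rw [intervalIntegral.integral_congr heq1, piece1 f hf0 hf1,
    intervalIntegral.integral_congr_ae heq2]
  simp
  ring

/-- If `X` has density `sin x` on `[0, π/2]` and `Y` is independent uniform on
`[0, π/2]` (joint density `(2/π) sin x`), then `F = sin X cos Y` is uniform on
`[0,1]`: its CDF satisfies `P(F ≤ f) = f` for all `f ∈ (0,1)`. -/
theorem sin_cos_uniform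
    (μ : Measure (ℝ × ℝ))
    (hμ : μ = (volume.restrict
        (Set.Icc (0 : ℝ) (π / 2) ×ˢ Set.Icc (0 : ℝ) (π / 2))).withDensity
        (fun p => ENNReal.ofReal ((2 / π) * Real.sin p.1))) :
    ∀ f ∈ Set.Ioo (0 : ℝ) 1,
      μ {p : ℝ × ℝ | Real.sin p.1 * Real.cos p.2 ≤ f} = ENNReal.ofReal f := by
  intro f hf
  obtain ⟨hf0, hf1⟩ := hf
  have hπ : 0 < π := Real.pi_pos
  set A : Set ℝ := Set.Icc (0:ℝ) (π/2) with hA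
  set S : Set (ℝ × ℝ) := {p : ℝ × ℝ | Real.sin p.1 * Real.cos p.2 ≤ f} with hSdef
  have hS : MeasurableSet S :=
    (isClosed_le (by fun_prop) continuous_const).measurableSet
  set g : ℝ × ℝ → ENNReal := fun p => ENNReal.ofReal ((2 / π) * Real.sin p.1) with hgdef
  have hgm : Measurable g := by fun_prop
  -- rewrite μ S as a double lintegral
  have h1 : μ S = ∫⁻ p, S.indicator g p
      ∂((volume.restrict A).prod (volume.restrict A)) := by
    rw [hμ, withDensity_apply _ hS, Measure.prod_restrict,
      lintegral_indicator hS]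
    rfl
  rw [h1, lintegral_prod_symm _ ((hgm.indicator hS).aemeasurable)]
  -- inner integral computation
  set F : ℝ → ℝ := fun y => (2/π) * (1 - Real.sqrt (1 - (min 1 (f / Real.cos y))^2)) with hF
  have hinner : ∀ᵐ y ∂(volume.restrict A),
      (∫⁻ x, S.indicator g (x, y) ∂(volume.restrict A)) = ENNReal.ofReal (F y) := by
    have hne : ∀ᵐ (x : ℝ) ∂(volume : Measure ℝ), x ≠ π/2 := by
      refine ae_iff.2 ?_; simpa using Real.volume_singleton
    filter_upwards [ae_restrict_mem measurableSet_Icc, ae_restrict_of_ae hne] with y hyA hyne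
    have hy2 : y < π/2 := lt_of_le_of_ne hyA.2 hyne
    have hcos : 0 < Real.cos y := Real.cos_pos_of_mem_Ioo ⟨by linarith [hyA.1], hy2⟩
    set m := min 1 (f / Real.cos y) with hm
    have hm0 : 0 ≤ m := le_min (by norm_num) (by positivity)
    have hm1 : m ≤ 1 := min_le_left _ _
    set r := Real.arcsin m with hr
    have hr0 : 0 ≤ r := Real.arcsin_nonneg.2 hm0
    have hr2 : r ≤ π/2 := Real.arcsin_le_pi_div_two m
    have hsinr : Real.sin r = m := Real.sin_arcsin (by linarith) hm1
    set T : Set ℝ := {x : ℝ | Real.sin x * Real.cos y ≤ f} with hT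
    have hTm : MeasurableSet T :=
      (isClosed_le (by fun_prop) continuous_const).measurableSet
    have hind : ∀ x, S.indicator g (x, y)
        = T.indicator (fun x => ENNReal.ofReal ((2/π) * Real.sin x)) x := by
      intro x
      by_cases hx : Real.sin x * Real.cos y ≤ f
      · rw [Set.indicator_of_mem (by exact hx), Set.indicator_of_mem (by exact hx)]
      · rw [Set.indicator_of_notMem (by exact hx), Set.indicator_of_notMem (by exact hx)]
    have hset : T ∩ A = Set.Icc (0:ℝ) r := by
      ext x
      constructor
      · rintro ⟨hxT, hxA⟩
        have hsx : Real.sin x ≤ m := by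
          refine le_min (Real.sin_le_one x) ?_
          rw [le_div_iff₀ hcos]
          exact hxT
        refine ⟨hxA.1, ?_⟩
        have := Real.strictMonoOn_sin.le_iff_le
          (⟨by linarith [hxA.1], hxA.2⟩ : x ∈ Set.Icc (-(π/2)) (π/2))
          (⟨by linarith, hr2⟩ : r ∈ Set.Icc (-(π/2)) (π/2))
        rw [← this]
        rw [hsinr]; exact hsx
      · rintro ⟨hx0, hxr⟩
        have hxA : x ∈ A := ⟨hx0, le_trans hxr hr2⟩
        have hsx : Real.sin x ≤ m := by
          rw [← hsinr]
          refine Real.strictMonoOn_sin.monotoneOn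
            (⟨by linarith, by exact hxA.2⟩ : x ∈ Set.Icc (-(π/2)) (π/2))
            (⟨by linarith, hr2⟩ : r ∈ Set.Icc (-(π/2)) (π/2)) hxr
        refine ⟨?_, hxA⟩
        show Real.sin x * Real.cos y ≤ f
        have : Real.sin x ≤ f / Real.cos y := le_trans hsx (min_le_right _ _)
        rwa [le_div_iff₀ hcos] at this
    calc ∫⁻ x, S.indicator g (x, y) ∂(volume.restrict A)
        = ∫⁻ x, T.indicator (fun x => ENNReal.ofReal ((2/π) * Real.sin x)) x
            ∂(volume.restrict A) := by
          exact lintegral_congr hind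
      _ = ∫⁻ x in T, ENNReal.ofReal ((2/π) * Real.sin x) ∂(volume.restrict A) :=
          lintegral_indicator hTm _
      _ = ∫⁻ x in Set.Icc (0:ℝ) r, ENNReal.ofReal ((2/π) * Real.sin x) ∂volume := by
          rw [Measure.restrict_restrict hTm, hset]
      _ = ENNReal.ofReal (∫ x in Set.Icc (0:ℝ) r, (2/π) * Real.sin x ∂volume) := by
          rw [ofReal_integral_eq_lintegral_ofReal]
          · exact (Continuous.integrableOn_Icc (by fun_prop))
          · refine (ae_restrict_mem measurableSet_Icc).mono (fun x hx => ?_)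
            have : 0 ≤ Real.sin x := Real.sin_nonneg_of_nonneg_of_le_pi hx.1
              (le_trans hx.2 (by linarith [Real.pi_pos]))
            positivity
      _ = ENNReal.ofReal (F y) := by
          rw [MeasureTheory.integral_Icc_eq_integral_Ioc, ← intervalIntegral.integral_of_le hr0,
            intervalIntegral.integral_const_mul, integral_sin, Real.cos_zero, hr,
            Real.cos_arcsin]
  rw [lintegral_congr_ae hinner]
  have hFm : Measurable F := by
    apply Measurable.const_mul
    apply Measurable.const_sub
    apply Real.continuous_sqrt.measurable.comp
    apply Measurable.const_sub
    exact ((measurable_const.min (measurable_const.div Real.continuous_cos.measurable)).pow_const 2)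
  have hF01 : ∀ z : ℝ, 0 ≤ F z ∧ F z ≤ 2/π := by
    intro z
    have h1 : Real.sqrt (1 - (min 1 (f / Real.cos z))^2) ≤ 1 :=
      Real.sqrt_le_one.2 (by nlinarith [sq_nonneg (min 1 (f / Real.cos z))])
    have h2 : 0 ≤ Real.sqrt (1 - (min 1 (f / Real.cos z))^2) := Real.sqrt_nonneg _
    constructor
    · apply mul_nonneg (by positivity); linarith
    · have : 1 - Real.sqrt (1 - (min 1 (f / Real.cos z))^2) ≤ 1 := by linarith
      calc F z ≤ (2/π) * 1 := by
            apply mul_le_mul_of_nonneg_left this (by positivity)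
        _ = 2/π := mul_one _
  have hIntF : IntegrableOn F A volume := by
    apply Measure.integrableOn_of_bounded (M := 2/π)
    · rw [hA, Real.volume_Icc]; exact ENNReal.ofReal_ne_top
    · exact hFm.aestronglyMeasurable
    · refine Filter.Eventually.of_forall (fun z => ?_)
      rw [Real.norm_eq_abs, abs_le]
      exact ⟨by linarith [(hF01 z).1, Real.pi_pos, div_pos (by norm_num : (0:ℝ)<2) Real.pi_pos], (hF01 z).2⟩
  rw [← ofReal_integral_eq_lintegral_ofReal hIntF
    (Filter.Eventually.of_forall (fun z => (hF01 z).1))]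
  congr 1
  rw [hA, MeasureTheory.integral_Icc_eq_integral_Ioc,
    ← intervalIntegral.integral_of_le (by positivity : (0:ℝ) ≤ π/2)]
  rw [hF]
  simp only []
  rw [intervalIntegral.integral_const_mul, key_integral f hf0 hf1]
  field_simp
end
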